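/- Let R be a commutative ring, let S ∈ R, let k ≥ 1, and let δ₁, …, δ_k ∈ R. Define y₁ := (1 + δ₁)·S and, for 2 ≤ i ≤ k, y_i := (1 + δ_i)·(S − Σ_{j=1}^{i−1} y_j). Then Σ_{j=1}^{k} y_j = (1 − (−1)^k · ∏_{j=1}^{k} δ_j) · S. -/

import Mathlib

/-- If `y i = (1 + δ i) * (S - Σ_{j < i} y j)` for all `i`, then
`Σ_j y j = (1 - (-1)^k * ∏_j δ_j) * S`. -/
theorem stmt_15 (R : Type*) [CommRing R] (S : R) (k : ℕ) (hk : 1 ≤ k)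
    (δ : Fin k → R) (y : Fin k → R)
    (hy : ∀ i : Fin k, y i = (1 + δ i) * (S - ∑ j ∈ Finset.Iio i, y j)) :
    ∑ j, y j = (1 - (-1 : R) ^ k * ∏ j, δ j) * S := by
  have key : ∀ n, n ≤ k →
      S - ∑ j ∈ Finset.univ.filter (fun j : Fin k => (j : ℕ) < n), y j
        = (-1 : R) ^ n * (∏ j ∈ Finset.univ.filter (fun j : Fin k => (j : ℕ) < n), δ j) * S := by
    intro n
    induction n with
    | zero => intro _; simp
    | succ n ih =>
      intro hn
      have hnk : n < k := hn
      have ihn := ih (Nat.le_of_lt hnk)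
      have hset : Finset.univ.filter (fun j : Fin k => (j : ℕ) < n + 1)
          = insert ⟨n, hnk⟩ (Finset.univ.filter (fun j : Fin k => (j : ℕ) < n)) := by
        ext j
        simp [Nat.lt_succ_iff_lt_or_eq, Fin.ext_iff, or_comm]
        omega
      have hnotmem : (⟨n, hnk⟩ : Fin k) ∉
          Finset.univ.filter (fun j : Fin k => (j : ℕ) < n) := by simp
      have hIio : Finset.Iio (⟨n, hnk⟩ : Fin k)
          = Finset.univ.filter (fun j : Fin k => (j : ℕ) < n) := by
        ext j; simp [Fin.lt_def]
      rw [hset, Finset.sum_insert hnotmem, Finset.prod_insert hnotmem,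
        hy ⟨n, hnk⟩, hIio]
      rw [show ∑ j ∈ Finset.univ.filter (fun j : Fin k => (j : ℕ) < n), y j
          = S - (S - ∑ j ∈ Finset.univ.filter (fun j : Fin k => (j : ℕ) < n), y j) by ring,
        ihn]
      ring
  have hall : Finset.univ.filter (fun j : Fin k => (j : ℕ) < k) = Finset.univ := by
    ext j; simp [j.isLt]
  have := key k le_rfl
  rw [hall] at this
  have h2 : ∑ j, y j = S - (S - ∑ j, y j) := by ring
  rw [h2, this]; ring
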